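/- arXiv:0806.2391 — 2 statements merged into one kernel-verified Lean document; each statement's English description precedes it below -/
import Mathlib

section
/- Let (X, ρ, μ) be a quasimetric measure space with constants a₀, a₁ ≥ 1, satisfying the growth condition μ(B(a,r)) ≤ C₀ r. Let 1/p < α < 1 and p' = p/(p-1). Then there exists c > 0 independent of a and x such that for all a, x ∈ X with ρ(a,x) > 0, ∫_{E₂(x)} ρ(x,y)^{(α-1)p'} dμ(y) ≤ c ρ(a,x)^{1 + (α-1)p'}, where E₂(x) := {y : ρ(a,x)/(2a₁) ≤ ρ(a,y) ≤ 2a₁ ρ(a,x)}. -/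
open MeasureTheory ENNReal Set

variable {X : Type*} [MeasurableSpace X]

/-- Quasimetric ball `B(a,r) = {x : ρ(a,x) < r}`. -/
def qball (ρ : X → X → ℝ) (a : X) (r : ℝ) : Set X := {x | ρ a x < r}

/-- Estimate of the kernel integral over the annulus `E₂(x)` under the growth condition. -/
theorem integral_E2_estimate
    (ρ : X → X → ℝ) (μ : Measure X) (a₀ a₁ : ℝ)
    (ha₀ : 1 ≤ a₀) (ha₁ : 1 ≤ a₁)
    (hρ_nonneg : ∀ x y, 0 ≤ ρ x y)
    (hρ_pos : ∀ x y, x ≠ y → 0 < ρ x y)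
    (hρ_self : ∀ x, ρ x x = 0)
    (hρ_sym : ∀ x y, ρ x y ≤ a₀ * ρ y x)
    (hρ_tri : ∀ x y z, ρ x y ≤ a₁ * (ρ x z + ρ z y))
    (hball_meas : ∀ a r, MeasurableSet (qball ρ a r))
    (hball_fin : ∀ a r, μ (qball ρ a r) < ⊤)
    (C₀ : ℝ) (hC₀ : 0 < C₀)
    (hgrow : ∀ a : X, ∀ r : ℝ, 0 < r → μ (qball ρ a r) ≤ ENNReal.ofReal (C₀ * r))
    (p p' α : ℝ) (hp : 1 < p) (hp' : p' = p / (p - 1))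
    (hα₀ : 1/p < α) (hα₁ : α < 1) :
    ∃ c : ℝ, 0 < c ∧ ∀ a x : X, 0 < ρ a x →
      (∫⁻ y in {y | ρ a x / (2 * a₁) ≤ ρ a y ∧ ρ a y ≤ 2 * a₁ * ρ a x},
          ENNReal.ofReal (ρ x y ^ ((α - 1) * p')) ∂μ) ≤
        ENNReal.ofReal (c * ρ a x ^ (1 + (α - 1) * p')) := by
  have hp0 : (0:ℝ) < p := lt_trans one_pos hp
  have hp1 : (0:ℝ) < p - 1 := by linarith
  have hp'pos : 0 < p' := by rw [hp']; positivity
  set β := (α - 1) * p' with hβ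
  have hβneg : β < 0 := mul_neg_of_neg_of_pos (by linarith) hp'pos
  have hαp : 1 < α * p := by
    have := (div_lt_iff₀ hp0).mp hα₀
    linarith
  have hβgt : (-1:ℝ) < β := by
    rw [hβ, hp', mul_div_assoc', lt_div_iff₀ hp1]
    nlinarith
  have h1β : 0 < 1 + β := by linarith
  have h2 : (0:ℝ) < 2 := two_pos
  set K : ℝ := 2 * a₁ * (a₀ + 2 * a₁) with hK
  have hKpos : 0 < K := by nlinarith
  set r : ℝ := (2:ℝ) ^ (-(1 + β)) with hrdef
  have hr0 : 0 < r := Real.rpow_pos_of_pos h2 _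
  have hr1 : r < 1 := Real.rpow_lt_one_of_one_lt_of_neg one_lt_two (by linarith)
  have h1r : 0 < 1 - r := by linarith
  refine ⟨C₀ * K ^ (1 + β) * 2 ^ (-β) * (1 - r)⁻¹,
    mul_pos (mul_pos (mul_pos hC₀ (Real.rpow_pos_of_pos hKpos _))
      (Real.rpow_pos_of_pos h2 _)) (inv_pos.mpr h1r), ?_⟩
  intro a x hd
  set d : ℝ := ρ a x with hddef
  set R : ℝ := K * d with hRdef
  have hRpos : 0 < R := mul_pos hKpos hd
  set A : ℕ → Set X := fun k => qball ρ x (R / 2 ^ k) \ qball ρ x (R / 2 ^ (k + 1)) with hA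
  have hAmeas : ∀ k, MeasurableSet (A k) := fun k =>
    (hball_meas _ _).diff (hball_meas _ _)
  -- the annulus is contained in `insert x (⋃ k, A k)`
  have hsub : {y | ρ a x / (2 * a₁) ≤ ρ a y ∧ ρ a y ≤ 2 * a₁ * ρ a x} ⊆
      insert x (⋃ k, A k) := by
    intro y hy
    rcases eq_or_ne y x with h | h
    · exact mem_insert_iff.mpr (Or.inl h)
    · right
      have hyx : 0 < ρ x y := hρ_pos x y (Ne.symm h)
      have hlt : ρ x y < R := by
        have h1 : ρ x y ≤ a₁ * (ρ x a + ρ a y) := hρ_tri x y a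
        have h2' : ρ x a ≤ a₀ * ρ a x := hρ_sym x a
        have h3 : ρ a y ≤ 2 * a₁ * ρ a x := hy.2
        have : ρ x y ≤ a₁ * (a₀ + 2 * a₁) * d := by
          rw [hddef]; nlinarith [hρ_nonneg x a, hρ_nonneg a y]
        have hlt2 : a₁ * (a₀ + 2 * a₁) * d < R := by
          rw [hRdef, hK]; nlinarith
        linarith
      -- find k with R / 2^(k+1) ≤ ρ x y < R / 2^k
      have hex : ∃ n : ℕ, R / 2 ^ n ≤ ρ x y := by
        obtain ⟨n, hn⟩ := exists_pow_lt_of_lt_one (div_pos hyx hRpos) (by norm_num : (1:ℝ)/2 < 1)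
        refine ⟨n, ?_⟩
        have : R * (1/2) ^ n < R * (ρ x y / R) := by
          exact mul_lt_mul_of_pos_left hn hRpos
        rw [mul_div_cancel₀ _ (ne_of_gt hRpos)] at this
        have hpow : R * (1/2:ℝ) ^ n = R / 2 ^ n := by
          rw [div_pow, one_pow]; ring
        linarith [hpow ▸ this.le]
      classical
      set n₀ := Nat.find hex with hn₀
      have hn₀spec : R / 2 ^ n₀ ≤ ρ x y := Nat.find_spec hex
      have hn₀pos : 0 < n₀ := by
        rcases Nat.eq_zero_or_pos n₀ with h0 | h0
        · exfalso
          have := hn₀spec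
          rw [h0] at this
          simp at this
          linarith
        · exact h0
      refine mem_iUnion.mpr ⟨n₀ - 1, ?_⟩
      have hk1 : n₀ - 1 + 1 = n₀ := Nat.succ_pred_eq_of_pos hn₀pos
      constructor
      · -- ρ x y < R / 2 ^ (n₀ - 1)
        have := Nat.find_min hex (m := n₀ - 1) (by omega)
        exact lt_of_not_ge this
      · -- ¬ ρ x y < R / 2 ^ (n₀ - 1 + 1)
        intro hmem
        rw [hk1] at hmem
        exact absurd hn₀spec (not_le.mpr hmem)
  have hμx : μ {x} = 0 := by
    by_contra h
    have hfin : μ {x} < ⊤ := by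
      refine lt_of_le_of_lt (measure_mono ?_) (hball_fin x 1)
      intro z hz
      rw [mem_singleton_iff] at hz
      rw [hz]
      show ρ x x < 1
      rw [hρ_self]; norm_num
    have htr : 0 < (μ {x}).toReal := ENNReal.toReal_pos h hfin.ne
    have hball : μ {x} ≤ ENNReal.ofReal (C₀ * ((μ {x}).toReal / (2 * C₀))) := by
      refine le_trans (measure_mono ?_) (hgrow x ((μ {x}).toReal / (2 * C₀)) (by positivity))
      intro z hz
      rw [mem_singleton_iff] at hz
      rw [hz]
      show ρ x x < _
      rw [hρ_self]; positivity
    rw [show C₀ * ((μ {x}).toReal / (2 * C₀)) = (μ {x}).toReal / 2 by field_simp] at hball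
    have := ENNReal.toReal_le_of_le_ofReal (by positivity) hball
    linarith
  calc (∫⁻ y in {y | ρ a x / (2 * a₁) ≤ ρ a y ∧ ρ a y ≤ 2 * a₁ * ρ a x},
          ENNReal.ofReal (ρ x y ^ β) ∂μ)
      ≤ ∫⁻ y in insert x (⋃ k, A k), ENNReal.ofReal (ρ x y ^ β) ∂μ :=
        lintegral_mono_set hsub
    _ ≤ (∫⁻ y in ({x} : Set X), ENNReal.ofReal (ρ x y ^ β) ∂μ) +
        ∫⁻ y in ⋃ k, A k, ENNReal.ofReal (ρ x y ^ β) ∂μ := by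
        rw [insert_eq]; exact lintegral_union_le _ _ _
    _ = ∫⁻ y in ⋃ k, A k, ENNReal.ofReal (ρ x y ^ β) ∂μ := by
        rw [setLIntegral_measure_zero _ _ hμx, zero_add]
    _ ≤ ∑' k, ∫⁻ y in A k, ENNReal.ofReal (ρ x y ^ β) ∂μ := lintegral_iUnion_le _ _
    _ ≤ ∑' k : ℕ, ENNReal.ofReal ((C₀ * R ^ (1 + β) * 2 ^ (-β)) * r ^ k) := by
        refine ENNReal.tsum_le_tsum fun k => ?_
        have hbd : ∀ y ∈ A k, ENNReal.ofReal (ρ x y ^ β) ≤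
            ENNReal.ofReal ((R / 2 ^ (k + 1)) ^ β) := by
          intro y hy
          rcases hy with ⟨_, hy2⟩
          have hge : R / 2 ^ (k + 1) ≤ ρ x y := not_lt.mp hy2
          exact ENNReal.ofReal_le_ofReal
            (Real.rpow_le_rpow_of_nonpos (by positivity) hge hβneg.le)
        calc (∫⁻ y in A k, ENNReal.ofReal (ρ x y ^ β) ∂μ)
            ≤ ∫⁻ _ in A k, ENNReal.ofReal ((R / 2 ^ (k + 1)) ^ β) ∂μ :=
              setLIntegral_mono' (hAmeas k) hbd
          _ = ENNReal.ofReal ((R / 2 ^ (k + 1)) ^ β) * μ (A k) := setLIntegral_const _ _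
          _ ≤ ENNReal.ofReal ((R / 2 ^ (k + 1)) ^ β) * ENNReal.ofReal (C₀ * (R / 2 ^ k)) := by
              refine mul_le_mul_right ?_ _
              refine le_trans (measure_mono diff_subset) (hgrow x _ (by positivity))
          _ = ENNReal.ofReal ((R / 2 ^ (k + 1)) ^ β * (C₀ * (R / 2 ^ k))) :=
              (ENNReal.ofReal_mul (by positivity)).symm
          _ = ENNReal.ofReal ((C₀ * R ^ (1 + β) * 2 ^ (-β)) * r ^ k) := by
              congr 1
              have e1 : ((2:ℝ) ^ (k + 1)) = (2:ℝ) ^ ((k + 1 : ℕ) : ℝ) :=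
                (Real.rpow_natCast 2 (k + 1)).symm
              have e2 : ((2:ℝ) ^ k) = (2:ℝ) ^ ((k : ℕ) : ℝ) := (Real.rpow_natCast 2 k).symm
              have e3 : r ^ k = (2:ℝ) ^ (-(1 + β) * (k:ℝ)) := by
                rw [hrdef, ← Real.rpow_natCast ((2:ℝ) ^ (-(1 + β))) k,
                  ← Real.rpow_mul h2.le]
              rw [e1, e2, e3, Real.div_rpow hRpos.le (Real.rpow_nonneg h2.le _),
                ← Real.rpow_mul h2.le]
              push_cast
              calc R ^ β / 2 ^ (((k:ℝ) + 1) * β) * (C₀ * (R / 2 ^ (k:ℝ)))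
                  = C₀ * (R * R ^ β) * ((2:ℝ) ^ (-(((k:ℝ) + 1) * β)) * 2 ^ (-(k:ℝ))) := by
                    rw [div_eq_mul_inv, div_eq_mul_inv, ← Real.rpow_neg h2.le,
                      ← Real.rpow_neg h2.le]
                    ring
                _ = C₀ * (R * R ^ β) * (2:ℝ) ^ (-(((k:ℝ) + 1) * β) + -(k:ℝ)) := by
                    rw [← Real.rpow_add h2]
                _ = C₀ * (R * R ^ β) * ((2:ℝ) ^ (-β) * 2 ^ (-(1 + β) * (k:ℝ))) := by
                    rw [← Real.rpow_add h2]
                    congr 1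
                    ring
                _ = C₀ * R ^ (1 + β) * 2 ^ (-β) * 2 ^ (-(1 + β) * (k:ℝ)) := by
                    rw [Real.rpow_add hRpos, Real.rpow_one]
                    ring
    _ = ENNReal.ofReal (C₀ * R ^ (1 + β) * 2 ^ (-β)) * ∑' k : ℕ, ENNReal.ofReal (r ^ k) := by
        rw [← ENNReal.tsum_mul_left]
        congr 1; ext k
        exact ENNReal.ofReal_mul (by positivity)
    _ = ENNReal.ofReal (C₀ * R ^ (1 + β) * 2 ^ (-β)) * ENNReal.ofReal ((1 - r)⁻¹) := by
        congr 1
        have : ∀ k : ℕ, ENNReal.ofReal (r ^ k) = ENNReal.ofReal r ^ k := fun k =>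
          ENNReal.ofReal_pow hr0.le k
        simp_rw [this]
        rw [ENNReal.tsum_geometric, ← ENNReal.ofReal_one, ← ENNReal.ofReal_sub _ hr0.le,
          ENNReal.ofReal_inv_of_pos (by linarith)]
    _ = ENNReal.ofReal (C₀ * K ^ (1 + β) * 2 ^ (-β) * (1 - r)⁻¹ * d ^ (1 + β)) := by
        rw [← ENNReal.ofReal_mul (by positivity)]
        congr 1
        rw [hRdef, Real.mul_rpow hKpos.le hd.le]
        ring
end

section
/- Let (X, ρ, μ) be a space of homogeneous type with μ(X) = ∞ and μ({x}) = 0 for each x ∈ X, and such that B(a,r₂)∖B(a,r₁) ≠ ∅ for all 0 < r₁ < r₂. Then sup over all balls B of μ(B) is infinite, and inf over all balls B with μ(B) > 0 of μ(B) is zero; consequently, if μ(B)^θ ≤ c for all balls B and some constants θ ∈ ℝ and c > 0, then θ = 0. -/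
open MeasureTheory ENNReal Set

variable {X : Type*} [MeasurableSpace X]

/-- On an SHT with infinite total measure, no atoms and nonempty shells, ball measures are
unbounded above and get arbitrarily small; hence `μ(B)^θ ≤ c` for all balls forces `θ = 0`. -/
theorem ball_measures_unbounded_and_small
    (ρ : X → X → ℝ) (μ : Measure X) (a₀ a₁ : ℝ)
    (ha₀ : 1 ≤ a₀) (ha₁ : 1 ≤ a₁)
    (hρ_nonneg : ∀ x y, 0 ≤ ρ x y)
    (hρ_pos : ∀ x y, x ≠ y → 0 < ρ x y)
    (hρ_self : ∀ x, ρ x x = 0)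
    (hρ_sym : ∀ x y, ρ x y ≤ a₀ * ρ y x)
    (hρ_tri : ∀ x y z, ρ x y ≤ a₁ * (ρ x z + ρ z y))
    (hball_meas : ∀ a r, MeasurableSet (qball ρ a r))
    (hball_fin : ∀ a r, μ (qball ρ a r) < ⊤)
    (C₁ : ℝ≥0∞) (hC₁ : 1 < C₁)
    (hdbl : ∀ a : X, ∀ r : ℝ, 0 < r → μ (qball ρ a (2*r)) ≤ C₁ * μ (qball ρ a r))
    (hXinf : μ Set.univ = ⊤) (hatoms : ∀ x : X, μ {x} = 0)
    (hshell : ∀ a : X, ∀ r₁ r₂ : ℝ, 0 < r₁ → r₁ < r₂ →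
      (qball ρ a r₂ \ qball ρ a r₁).Nonempty) :
    (⨆ (a : X) (r : ℝ) (_ : 0 < r), μ (qball ρ a r)) = ⊤ ∧
    (⨅ (a : X) (r : ℝ) (_ : 0 < r) (_ : 0 < μ (qball ρ a r)), μ (qball ρ a r)) = 0 ∧
    ∀ θ : ℝ, ∀ c : ℝ≥0∞, 0 < c → c ≠ ⊤ →
      (∀ a : X, ∀ r : ℝ, 0 < r → (μ (qball ρ a r)) ^ θ ≤ c) → θ = 0 := by
  -- X is nonempty
  have hne : Nonempty X := by
    by_contra h
    rw [not_nonempty_iff] at h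
    rw [Set.univ_eq_empty_iff.mpr h, measure_empty] at hXinf
    exact top_ne_zero hXinf.symm
  obtain ⟨a⟩ := hne
  -- every ball has positive measure
  have hpos : ∀ b : X, ∀ r : ℝ, 0 < r → 0 < μ (qball ρ b r) := by
    intro b r hr
    by_contra h
    push_neg at h
    have h0 : μ (qball ρ b r) = 0 := le_antisymm h zero_le
    have hn : ∀ n : ℕ, μ (qball ρ b (2 ^ n * r)) = 0 := by
      intro n
      induction n with
      | zero => simpa using h0
      | succ n ih =>
        have hr' : (0:ℝ) < 2 ^ n * r := by positivity
        have h1 := hdbl b (2 ^ n * r) hr'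
        rw [ih, mul_zero] at h1
        have h2 : μ (qball ρ b (2 * (2 ^ n * r))) = 0 := le_antisymm h1 zero_le
        have : (2:ℝ) ^ (n + 1) * r = 2 * (2 ^ n * r) := by ring
        rw [this]
        exact h2
    have huniv : Set.univ ⊆ ⋃ n : ℕ, qball ρ b (2 ^ n * r) := by
      intro x _
      obtain ⟨n, hn'⟩ := pow_unbounded_of_one_lt (ρ b x / r) (by norm_num : (1:ℝ) < 2)
      exact Set.mem_iUnion.2 ⟨n, by
        simpa [qball, Set.mem_setOf_eq] using (div_lt_iff₀ hr).1 hn'⟩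
    have : μ Set.univ = 0 :=
      measure_mono_null huniv (measure_iUnion_null hn)
    rw [hXinf] at this
    exact top_ne_zero this
  -- arbitrarily large balls
  have hbig : ∀ M : ℝ≥0∞, M < ⊤ → ∃ r : ℝ, 0 < r ∧ M < μ (qball ρ a r) := by
    intro M hM
    have hmono : Monotone (fun n : ℕ => qball ρ a ((n : ℝ) + 1)) := by
      intro n m hnm x hx
      simp only [qball, Set.mem_setOf_eq] at hx ⊢
      exact lt_of_lt_of_le hx (by exact_mod_cast add_le_add_left (Nat.cast_le.2 hnm) 1)
    have huniv : (⋃ n : ℕ, qball ρ a ((n : ℝ) + 1)) = Set.univ := by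
      ext x
      simp only [Set.mem_iUnion, Set.mem_univ, iff_true, qball, Set.mem_setOf_eq]
      obtain ⟨n, hn⟩ := exists_nat_gt (ρ a x)
      exact ⟨n, hn.trans_le (by linarith)⟩
    have hsup : (⨆ n : ℕ, μ (qball ρ a ((n : ℝ) + 1))) = ⊤ := by
      rw [← hmono.measure_iUnion, huniv, hXinf]
    have : M < ⨆ n : ℕ, μ (qball ρ a ((n : ℝ) + 1)) := by rw [hsup]; exact hM
    obtain ⟨n, hn⟩ := lt_iSup_iff.mp this
    exact ⟨(n : ℝ) + 1, by positivity, hn⟩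
  -- arbitrarily small balls
  have hsmall : ∀ ε : ℝ≥0∞, 0 < ε → ∃ r : ℝ, 0 < r ∧ μ (qball ρ a r) < ε := by
    intro ε hε
    have hanti : Antitone (fun n : ℕ => qball ρ a (1 / ((n : ℝ) + 1))) := by
      intro n m hnm x hx
      simp only [qball, Set.mem_setOf_eq] at hx ⊢
      refine lt_of_lt_of_le hx ?_
      apply one_div_le_one_div_of_le (by positivity)
      exact add_le_add_left (Nat.cast_le.2 hnm) 1
    have hinter : (⋂ n : ℕ, qball ρ a (1 / ((n : ℝ) + 1))) = {a} := by
      ext x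
      simp only [Set.mem_iInter, qball, Set.mem_setOf_eq, Set.mem_singleton_iff]
      constructor
      · intro h
        by_contra hxa
        have hp := hρ_pos a x fun e => hxa e.symm
        obtain ⟨n, hn⟩ := exists_nat_one_div_lt hp
        exact absurd (h n) (not_lt.2 hn.le)
      · rintro rfl
        intro n
        rw [hρ_self]
        positivity
    have htend := tendsto_measure_iInter_atTop (μ := μ)
      (fun n => (hball_meas a _).nullMeasurableSet) hanti
      ⟨0, (hball_fin a _).ne⟩
    rw [hinter, hatoms a] at htend
    have hev : ∀ᶠ n : ℕ in Filter.atTop, μ (qball ρ a (1 / ((n : ℝ) + 1))) < ε :=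
      htend.eventually_lt_const hε
    obtain ⟨n, hn⟩ := hev.exists
    exact ⟨1 / ((n : ℝ) + 1), by positivity, hn⟩
  refine ⟨?_, ?_, ?_⟩
  · -- supremum is ⊤
    by_contra h
    obtain ⟨r, hr, hlt⟩ := hbig _ (lt_top_iff_ne_top.2 h)
    have hle : μ (qball ρ a r) ≤ ⨆ (b : X) (r : ℝ) (_ : 0 < r), μ (qball ρ b r) :=
      le_iSup_of_le a (le_iSup_of_le r (le_iSup_of_le hr le_rfl))
    exact absurd (hlt.trans_le hle) (lt_irrefl _)
  · -- infimum is 0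
    by_contra h
    obtain ⟨r, hr, hlt⟩ := hsmall _ (pos_iff_ne_zero.2 h)
    have hle : (⨅ (b : X) (r : ℝ) (_ : 0 < r) (_ : 0 < μ (qball ρ b r)), μ (qball ρ b r))
        ≤ μ (qball ρ a r) :=
      iInf_le_of_le a (iInf_le_of_le r (iInf_le_of_le hr (iInf_le_of_le (hpos a r hr) le_rfl)))
    exact absurd (hle.trans_lt hlt) (lt_irrefl _)
  · -- θ = 0
    intro θ c hc hctop hbound
    by_contra hθ
    rcases lt_or_gt_of_ne hθ with hneg | hposθ
    · -- θ < 0 : use small balls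
      set ε : ℝ≥0∞ := (c + c) ^ θ⁻¹ with hεdef
      have hcc0 : (0:ℝ≥0∞) < c + c := lt_of_lt_of_le hc le_self_add
      have hcct : c + c ≠ ⊤ := ENNReal.add_ne_top.2 ⟨hctop, hctop⟩
      have hε : 0 < ε := ENNReal.rpow_pos hcc0 hcct
      obtain ⟨r, hr, hlt⟩ := hsmall ε hε
      have h1 : μ (qball ρ a r) ^ (-θ) < ε ^ (-θ) :=
        ENNReal.rpow_lt_rpow hlt (by linarith)
      have h2 : ε ^ θ < μ (qball ρ a r) ^ θ := by
        have e1 : ε ^ θ = (ε ^ (-θ))⁻¹ := by rw [← ENNReal.rpow_neg, neg_neg]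
        have e2 : μ (qball ρ a r) ^ θ = (μ (qball ρ a r) ^ (-θ))⁻¹ := by
          rw [← ENNReal.rpow_neg, neg_neg]
        rw [e1, e2]
        exact ENNReal.inv_lt_inv.2 h1
      have hεθ : ε ^ θ = c + c := ENNReal.rpow_inv_rpow hθ _
      have hclt : c < c + c := ENNReal.lt_add_right hctop hc.ne'
      have := (hclt.trans (hεθ ▸ h2)).trans_le (hbound a r hr)
      exact absurd this (lt_irrefl _)
    · -- θ > 0 : use large balls
      set M : ℝ≥0∞ := c ^ θ⁻¹ with hMdef
      have hMlt : M < ⊤ :=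
        ENNReal.rpow_lt_top_of_nonneg (by positivity) hctop
      obtain ⟨r, hr, hlt⟩ := hbig M hMlt
      have h1 : M ^ θ < μ (qball ρ a r) ^ θ := ENNReal.rpow_lt_rpow hlt hposθ
      have hMθ : M ^ θ = c := ENNReal.rpow_inv_rpow hθ _
      have := (hMθ ▸ h1).trans_le (hbound a r hr)
      exact absurd this (lt_irrefl _)
end
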